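/- arXiv:1008.3024 — 2 statements merged into one kernel-verified Lean document; each statement's English description precedes it below -/
import Mathlib

section
/- Let R be a commutative ring and I an ideal of R with I² = 0. Let S and B be R-algebras, both flat as R-modules, and let f : S → B be an R-algebra homomorphism such that the induced ring homomorphism S/IS → B/IB is étale. Then f is étale, i.e., B is an étale S-algebra via f. -/
universe u

open TensorProduct

/-- Nakayama-type lemma for square-zero ideals. -/
lemma sqZero_le_of_le_sup_smul {A : Type*} [CommRing A] {M : Type*} [AddCommGroup M] [Module A M]
    {J : Ideal A} (hJ : J ^ 2 = ⊥) {N N' : Submodule A M}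
    (h : N' ≤ N ⊔ J • N') : N' ≤ N := by
  have h2 : J • N' ≤ N := by
    calc J • N' ≤ J • (N ⊔ J • N') := Submodule.smul_mono le_rfl h
    _ = J • N ⊔ J • (J • N') := Submodule.smul_sup _ _ _
    _ = J • N ⊔ (J * J) • N' := by rw [← mul_smul]
    _ = J • N ⊔ (⊥ : Submodule A M) := by rw [← pow_two, hJ, Submodule.bot_smul]
    _ ≤ N ⊔ ⊥ := sup_le_sup_right Submodule.smul_le_right _
    _ = N := by simp
  exact le_trans h (sup_le le_rfl h2)

/-- If `Q` is flat and `g : M → Q` surjective, then `ker g ∩ I•M = I• ker g`. -/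
lemma mem_smul_ker_of_flat {R : Type*} [CommRing R] {M Q : Type*} [AddCommGroup M] [Module R M]
    [AddCommGroup Q] [Module R Q] [Module.Flat R Q] (I : Ideal R)
    (g : M →ₗ[R] Q) (hg : Function.Surjective g)
    {x : M} (hx : x ∈ I • (⊤ : Submodule R M)) (hker : g x = 0) :
    x ∈ I • (LinearMap.ker g) := by
  -- the multiplication maps
  let μM : I ⊗[R] M →ₗ[R] M := TensorProduct.lift ((LinearMap.lsmul R M).comp I.subtype)
  let μQ : I ⊗[R] Q →ₗ[R] Q := TensorProduct.lift ((LinearMap.lsmul R Q).comp I.subtype)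
  have hμQinj : Function.Injective μQ := by
    have h1 := (Module.Flat.iff_rTensor_injective' (R := R) (M := Q)).mp ‹_› I
    have hcomp : μQ = (TensorProduct.lid R Q).toLinearMap ∘ₗ
        (LinearMap.rTensor Q I.subtype) := by
      ext i q
      simp [μQ]
    rw [hcomp, LinearMap.coe_comp]
    exact (TensorProduct.lid R Q).injective.comp h1
  -- get a preimage of x in I ⊗ M
  obtain ⟨ξ, hξ⟩ : ∃ ξ : I ⊗[R] M, μM ξ = x := by
    refine Submodule.smul_induction_on hx (fun i hi m _ => ⟨⟨i, hi⟩ ⊗ₜ m, by simp [μM]⟩) ?_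
    rintro a b ⟨ξa, ha⟩ ⟨ξb, hb⟩
    exact ⟨ξa + ξb, by simp [ha, hb]⟩
  have hcommM : g ∘ₗ μM = μQ ∘ₗ LinearMap.lTensor I g := by
    ext i m; simp [μM, μQ]
  have h0 : LinearMap.lTensor I g ξ = 0 := by
    apply hμQinj
    rw [map_zero, ← LinearMap.comp_apply, ← hcommM, LinearMap.comp_apply, hξ, hker]
  have hex := lTensor_exact (f := (LinearMap.ker g).subtype) I
    (LinearMap.exact_subtype_ker_map g) hg
  obtain ⟨ζ, hζ⟩ : ∃ ζ, LinearMap.lTensor I (LinearMap.ker g).subtype ζ = ξ := (hex ξ).mp h0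
  have : ∀ ζ : I ⊗[R] (LinearMap.ker g),
      μM (LinearMap.lTensor I (LinearMap.ker g).subtype ζ) ∈ I • (LinearMap.ker g) := by
    intro ζ
    induction ζ using TensorProduct.induction_on with
    | zero => simp
    | tmul i k => simpa [μM] using Submodule.smul_mem_smul i.2 k.2
    | add a b ha hb => rw [map_add, map_add]; exact Submodule.add_mem _ ha hb
  rw [← hξ, ← hζ]
  exact this ζ

set_option maxHeartbeats 1000000 in
set_option synthInstance.maxHeartbeats 200000 in
theorem unramified_aux
    {S : Type u} [CommRing S] {B : Type u} [CommRing B] [Algebra S B]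
    (JS : Ideal S) (JB : Ideal B) (hJB2 : JB ^ 2 = ⊥)
    (hJB : JB = JS.map (algebraMap S B))
    [Algebra (S ⧸ JS) (B ⧸ JB)]
    (hbar : ∀ s : S, algebraMap (S ⧸ JS) (B ⧸ JB) (Ideal.Quotient.mk JS s)
       = Ideal.Quotient.mk JB (algebraMap S B s))
    [Algebra.FormallyUnramified (S ⧸ JS) (B ⧸ JB)] :
    Algebra.FormallyUnramified S B := by
  classical
  set Ωq : Submodule B (Ω[B⁄S]) := JB • (⊤ : Submodule B (Ω[B⁄S])) with hΩq
  let Ω' := (Ω[B⁄S]) ⧸ Ωq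
  let q : (Ω[B⁄S]) →ₗ[B] Ω' := Submodule.mkQ _
  have hker : ∀ x ∈ JB, q ((KaehlerDifferential.D S B) x) = 0 := by
    intro x hx
    rw [hJB] at hx
    have hx' : x ∈ JS • (⊤ : Submodule S B) := by
      rw [Ideal.smul_top_eq_map]; exact hx
    refine Submodule.smul_induction_on hx' ?_ ?_
    · intro s hs b _
      have h1 : (KaehlerDifferential.D S B) (s • b)
          = algebraMap S B s • (KaehlerDifferential.D S B) b := by
        rw [Derivation.map_smul, algebra_compatible_smul B s]
      have hmem : (algebraMap S B s) • (KaehlerDifferential.D S B) b ∈ Ωq :=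
        Submodule.smul_mem_smul (hJB ▸ Ideal.mem_map_of_mem _ hs) trivial
      show Submodule.Quotient.mk ((KaehlerDifferential.D S B) (s • b)) = 0
      rw [h1, Submodule.Quotient.mk_eq_zero]
      exact hmem
    · intro a b ha hb
      rw [map_add, map_add, ha, hb, add_zero]
  have hcongr : ∀ a b : B, Ideal.Quotient.mk JB a = Ideal.Quotient.mk JB b →
      q ((KaehlerDifferential.D S B) a) = q ((KaehlerDifferential.D S B) b) := by
    intro a b hab
    have hsub : a - b ∈ JB := by
      rwa [Ideal.Quotient.mk_eq_mk_iff_sub_mem] at hab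
    have := hker _ hsub
    rw [map_sub, map_sub, sub_eq_zero] at this
    exact this
  -- module structures
  have htors : Module.IsTorsionBySet B Ω' JB := by
    intro m a
    obtain ⟨ω, rfl⟩ := Submodule.mkQ_surjective _ m
    have : (a : B) • ω ∈ Ωq := Submodule.smul_mem_smul a.2 trivial
    change (a : B) • Submodule.Quotient.mk ω = 0
    rw [← Submodule.Quotient.mk_smul, Submodule.Quotient.mk_eq_zero]
    exact this
  letI : Module (B ⧸ JB) Ω' := htors.module
  letI : Module (S ⧸ JS) Ω' := Module.compHom Ω' (algebraMap (S ⧸ JS) (B ⧸ JB))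
  have hsmul' : ∀ (c : S ⧸ JS) (m : Ω'), c • m = algebraMap (S ⧸ JS) (B ⧸ JB) c • m :=
    fun _ _ => rfl
  have hmk_smul : ∀ (b : B) (m : Ω'), (Ideal.Quotient.mk JB b) • m = b • m :=
    fun b m => htors.mk_smul b m
  letI : IsScalarTower (S ⧸ JS) (B ⧸ JB) Ω' := by
    constructor
    intro c x m
    rw [Algebra.smul_def, mul_smul, hsmul' c (x • m)]
  -- the derivation
  let D'fun : (B ⧸ JB) → Ω' := fun x =>
    Quotient.liftOn' x (fun b => q ((KaehlerDifferential.D S B) b))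
      (fun a b hab => hcongr a b (Quotient.sound' hab))
  have hD' : ∀ b : B, D'fun (Ideal.Quotient.mk JB b) = q ((KaehlerDifferential.D S B) b) :=
    fun _ => rfl
  let Der : Derivation (S ⧸ JS) (B ⧸ JB) Ω' :=
  { toFun := D'fun
    map_add' := by
      intro x y
      obtain ⟨a, rfl⟩ := Ideal.Quotient.mk_surjective x
      obtain ⟨b, rfl⟩ := Ideal.Quotient.mk_surjective y
      rw [← map_add, hD', hD', hD', map_add, map_add]
    map_smul' := by
      intro c x
      obtain ⟨s, rfl⟩ := Ideal.Quotient.mk_surjective c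
      obtain ⟨b, rfl⟩ := Ideal.Quotient.mk_surjective x
      have key : q ((KaehlerDifferential.D S B) (algebraMap S B s * b))
          = algebraMap S B s • q ((KaehlerDifferential.D S B) b) := by
        rw [← Algebra.smul_def, Derivation.map_smul, algebra_compatible_smul B s, map_smul]
      show D'fun (Ideal.Quotient.mk JS s • Ideal.Quotient.mk JB b)
          = Ideal.Quotient.mk JS s • D'fun (Ideal.Quotient.mk JB b)
      rw [Algebra.smul_def, hbar, ← map_mul, hD', key, hsmul', hbar, hmk_smul, hD']
    map_one_eq_zero' := by
      show D'fun (Ideal.Quotient.mk JB 1) = 0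
      rw [hD', Derivation.map_one_eq_zero, map_zero]
    leibniz' := by
      intro x y
      obtain ⟨a, rfl⟩ := Ideal.Quotient.mk_surjective x
      obtain ⟨b, rfl⟩ := Ideal.Quotient.mk_surjective y
      show D'fun (Ideal.Quotient.mk JB a * Ideal.Quotient.mk JB b)
          = Ideal.Quotient.mk JB a • D'fun (Ideal.Quotient.mk JB b)
            + Ideal.Quotient.mk JB b • D'fun (Ideal.Quotient.mk JB a)
      rw [← map_mul, hD', hD', hD', Derivation.leibniz, map_add, map_smul, map_smul,
        hmk_smul, hmk_smul] }
  -- conclude D lands in JB • ⊤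
  have hzero : ∀ b : B, q ((KaehlerDifferential.D S B) b) = 0 := by
    intro b
    have h1 : Der (Ideal.Quotient.mk JB b) = q ((KaehlerDifferential.D S B) b) := hD' b
    have h2 : Der (Ideal.Quotient.mk JB b) =
        (Der.liftKaehlerDifferential)
          ((KaehlerDifferential.D (S ⧸ JS) (B ⧸ JB)) (Ideal.Quotient.mk JB b)) :=
      (Derivation.congr_fun Der.liftKaehlerDifferential_comp _).symm
    have h3 : (KaehlerDifferential.D (S ⧸ JS) (B ⧸ JB)) (Ideal.Quotient.mk JB b) = 0 :=
      Subsingleton.elim _ _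
    rw [← h1, h2, h3, map_zero]
  have hDmem : ∀ b : B, (KaehlerDifferential.D S B) b ∈ Ωq := by
    intro b
    have := hzero b
    rwa [show q ((KaehlerDifferential.D S B) b)
      = Submodule.Quotient.mk ((KaehlerDifferential.D S B) b) from rfl,
      Submodule.Quotient.mk_eq_zero] at this
  have htop : (⊤ : Submodule B (Ω[B⁄S])) ≤ ⊥ ⊔ JB • ⊤ := by
    conv_lhs => rw [← KaehlerDifferential.span_range_derivation]
    refine Submodule.span_le.mpr ?_
    rintro _ ⟨b, rfl⟩
    exact Submodule.mem_sup_right (hDmem b)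
  have hbot := sqZero_le_of_le_sup_smul hJB2 htop
  constructor
  refine (subsingleton_iff_forall_eq 0).mpr fun y => ?_
  exact (Submodule.mem_bot B).mp (hbot trivial)

noncomputable def descendAux {S P B C : Type*} [CommRing S] [CommRing P] [CommRing B] [CommRing C]
    [Algebra S P] [Algebra S B] [Algebra S C] (π : P →ₐ[S] B) (hπ : Function.Surjective π)
    (φ : P →ₐ[S] C) (h : ∀ k, π k = 0 → φ k = 0) : B →ₐ[S] C :=
  (Ideal.Quotient.liftₐ (RingHom.ker π) φ (fun a ha => h a (RingHom.mem_ker.mp ha))).comp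
    (Ideal.quotientKerAlgEquivOfSurjective hπ).symm.toAlgHom

lemma descendAux_apply {S P B C : Type*} [CommRing S] [CommRing P] [CommRing B] [CommRing C]
    [Algebra S P] [Algebra S B] [Algebra S C] (π : P →ₐ[S] B) (hπ : Function.Surjective π)
    (φ : P →ₐ[S] C) (h : ∀ k, π k = 0 → φ k = 0) (x : P) :
    descendAux π hπ φ h (π x) = φ x := by
  have h1 : (Ideal.quotientKerAlgEquivOfSurjective hπ).symm (π x)
      = Ideal.Quotient.mk (RingHom.ker π) x := by
    apply (Ideal.quotientKerAlgEquivOfSurjective hπ).injective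
    rw [AlgEquiv.apply_symm_apply]
    simp only [Ideal.quotientKerAlgEquivOfSurjective, Ideal.quotientKerAlgEquivOfRightInverse]
    exact (RingHom.kerLift_mk (π : P →+* B) x).symm
  simp only [descendAux, AlgHom.coe_comp, Function.comp_apply, AlgEquiv.toAlgHom_eq_coe,
    AlgHom.coe_coe]
  rw [AlgEquiv.coe_algHom, h1, Ideal.Quotient.liftₐ_apply]
  rfl

lemma map_map_algebraMap {R S C : Type*} [CommRing R] [CommRing S] [CommRing C]
    [Algebra R S] [Algebra R C] [Algebra S C] [IsScalarTower R S C] (I : Ideal R) :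
    (I.map (algebraMap R S)).map (algebraMap S C) = I.map (algebraMap R C) := by
  rw [Ideal.map_map, ← IsScalarTower.algebraMap_eq]

set_option maxHeartbeats 1600000 in
set_option synthInstance.maxHeartbeats 400000 in
theorem smooth_aux
    (R : Type u) [CommRing R] (I : Ideal R) (hI : I ^ 2 = ⊥)
    (S : Type u) [CommRing S] [Algebra R S]
    (B : Type u) [CommRing B] [Algebra R B] [Algebra S B] [IsScalarTower R S B]
    [Module.Flat R B]
    (JS : Ideal S) (JB : Ideal B)
    (hJS : JS = I.map (algebraMap R S)) (hJB : JB = I.map (algebraMap R B))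
    [Algebra (S ⧸ JS) (B ⧸ JB)]
    (hbar : ∀ s : S, algebraMap (S ⧸ JS) (B ⧸ JB) (Ideal.Quotient.mk JS s)
        = Ideal.Quotient.mk JB (algebraMap S B s))
    [Algebra.FormallySmooth (S ⧸ JS) (B ⧸ JB)]
    [Algebra.FormallyUnramified S B] :
    Algebra.FormallySmooth S B := by
  classical
  refine Algebra.FormallySmooth.of_comp_surjective ?_
  intro C _ _ J hJ g
  letI : Algebra R C := ((algebraMap S C).comp (algebraMap R S)).toAlgebra
  letI : IsScalarTower R S C := IsScalarTower.of_algebraMap_eq fun _ => rfl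
  set JC : Ideal C := I.map (algebraMap R C) with hJCdef
  have hJC2 : JC ^ 2 = ⊥ := by rw [hJCdef, ← Ideal.map_pow, hI, Ideal.map_bot]
  have hSC : JS.map (algebraMap S C) = JC := by
    rw [hJS, hJCdef]; exact map_map_algebraMap I
  -- ===================== STEP 1 =====================
  set C' := C ⧸ JC with hC'def
  set K'' : Ideal C' := J.map (Ideal.Quotient.mk JC) with hK''def
  have hK''2 : K'' ^ 2 = ⊥ := by rw [hK''def, ← Ideal.map_pow, hJ, Ideal.map_bot]
  have hθker : ∀ c ∈ J, ((Ideal.Quotient.mkₐ S K'').comp (Ideal.Quotient.mkₐ S JC)) c = 0 := by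
    intro c hc
    show Ideal.Quotient.mk K'' (Ideal.Quotient.mk JC c) = 0
    rw [Ideal.Quotient.eq_zero_iff_mem]
    exact Ideal.mem_map_of_mem _ hc
  set θ : (C ⧸ J) →ₐ[S] (C' ⧸ K'') :=
    Ideal.Quotient.liftₐ J ((Ideal.Quotient.mkₐ S K'').comp (Ideal.Quotient.mkₐ S JC)) hθker
    with hθdef
  have hθ : ∀ c : C, θ (Ideal.Quotient.mk J c)
      = Ideal.Quotient.mk K'' (Ideal.Quotient.mk JC c) := by
    intro c
    rw [hθdef, Ideal.Quotient.liftₐ_apply]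
    rfl
  have halgC'ker : ∀ s ∈ JS, (Ideal.Quotient.mk JC) (algebraMap S C s) = 0 := by
    intro s hs
    rw [Ideal.Quotient.eq_zero_iff_mem, ← hSC]
    exact Ideal.mem_map_of_mem _ hs
  letI algSbarC' : Algebra (S ⧸ JS) C' :=
    (Ideal.Quotient.lift JS ((Ideal.Quotient.mk JC).comp (algebraMap S C))
      (fun s hs => halgC'ker s hs)).toAlgebra
  have hg₂ker : ∀ b ∈ JB, θ.comp g b = 0 := by
    intro b hb
    rw [hJB, ← map_map_algebraMap (S := S) I, ← hJS] at hb
    have hb' : b ∈ JS • (⊤ : Submodule S B) := by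
      rw [Ideal.smul_top_eq_map]; exact hb
    refine Submodule.smul_induction_on hb' ?_ ?_
    · intro s hs x _
      have h1 : (θ.comp g) (s • x) = algebraMap S (C' ⧸ K'') s * (θ.comp g) x := by
        rw [Algebra.smul_def, map_mul, AlgHom.commutes]
    -- algebraMap S (C'⧸K'') s = mk K'' (mk JC (alg s)) = 0
      have h2 : algebraMap S (C' ⧸ K'') s
          = Ideal.Quotient.mk K'' (Ideal.Quotient.mk JC (algebraMap S C s)) := rfl
      rw [h1, h2, halgC'ker s hs, map_zero, zero_mul]
    · intro x y hx hy
      rw [map_add, hx, hy, add_zero]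
  set τ₁ : (B ⧸ JB) →ₐ[S ⧸ JS] (C' ⧸ K'') :=
    { toRingHom := Ideal.Quotient.lift JB (θ.comp g).toRingHom hg₂ker
      commutes' := by
        intro c
        obtain ⟨s, rfl⟩ := Ideal.Quotient.mk_surjective c
        show Ideal.Quotient.lift JB (θ.comp g).toRingHom hg₂ker
          (algebraMap (S ⧸ JS) (B ⧸ JB) (Ideal.Quotient.mk JS s)) = _
        rw [hbar, Ideal.Quotient.lift_mk]
        show (θ.comp g) (algebraMap S B s) = _
        rw [AlgHom.commutes]
        rfl } with hτ₁def
  have hK''nil : IsNilpotent K'' := ⟨2, hK''2⟩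
  set hlift : (B ⧸ JB) →ₐ[S ⧸ JS] C' := Algebra.FormallySmooth.lift K'' hK''nil τ₁ with hliftdef
  have hhlift : ∀ b : B ⧸ JB, Ideal.Quotient.mk K'' (hlift b) = τ₁ b :=
    fun b => Algebra.FormallySmooth.mk_lift K'' hK''nil τ₁ b
  set h₁ : B →ₐ[S] C' :=
    { toRingHom := hlift.toRingHom.comp (Ideal.Quotient.mk JB)
      commutes' := by
        intro s
        show hlift (Ideal.Quotient.mk JB (algebraMap S B s)) = algebraMap S C' s
        rw [← hbar, AlgHom.commutes]
        rfl } with hh₁def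
  have hh₁ : ∀ b : B, h₁ b = hlift (Ideal.Quotient.mk JB b) := fun _ => rfl
  have hstep1 : ∀ b : B, Ideal.Quotient.mk K'' (h₁ b) = θ (g b) := by
    intro b
    rw [hh₁, hhlift]
    show Ideal.Quotient.lift JB (θ.comp g).toRingHom hg₂ker (Ideal.Quotient.mk JB b) = θ (g b)
    rw [Ideal.Quotient.lift_mk]
    rfl
  -- ===================== STEP 2 =====================
  set P := MvPolynomial B S with hPdef
  set π : P →ₐ[S] B := MvPolynomial.aeval _root_.id with hπdef
  have hπs : Function.Surjective π := fun b => ⟨MvPolynomial.X b, MvPolynomial.aeval_X _ _⟩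
  have hJCnil : IsNilpotent JC := ⟨2, hJC2⟩
  set p : P →ₐ[S] C := Algebra.FormallySmooth.lift JC hJCnil (h₁.comp π) with hpdef
  have hp : ∀ x : P, Ideal.Quotient.mk JC (p x) = h₁ (π x) :=
    fun x => Algebra.FormallySmooth.mk_lift JC hJCnil (h₁.comp π) x
  set K : Ideal P := RingHom.ker π with hKdef
  have hKmem : ∀ k ∈ K, p k ∈ JC := by
    intro k hk
    rw [← Ideal.Quotient.eq_zero_iff_mem, hp, RingHom.mem_ker.mp hk, map_zero]
  set JP : Ideal P := I.map (algebraMap R P) with hJPdef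
  have hflatkey : ∀ x ∈ K, x ∈ JP → p x = 0 := by
    intro x hxK hxJP
    set πR : P →ₗ[R] B := π.toLinearMap.restrictScalars R with hπRdef
    have hπRs : Function.Surjective πR := hπs
    have hmem : x ∈ I • (⊤ : Submodule R P) := by
      rw [Ideal.smul_top_eq_map]
      exact hxJP
    have hxπ : π x = 0 := RingHom.mem_ker.mp hxK
    have hxker : πR x = 0 := hxπ
    have hx2 := mem_smul_ker_of_flat I πR hπRs hmem hxker
    have hgen : ∀ y ∈ I • (LinearMap.ker πR), p y = 0 := by
      intro y hy
      refine Submodule.smul_induction_on hy ?_ ?_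
      · intro i hi m hm
        have hmK : m ∈ K := by
          rw [hKdef, RingHom.mem_ker]
          exact hm
        have h1 : p (i • m) = i • p m := map_smul (p.toLinearMap.restrictScalars R) i m
        have h2 : (i • p m : C) = algebraMap R C i * p m := Algebra.smul_def i (p m)
        have h3 : algebraMap R C i * p m ∈ JC * JC :=
          Ideal.mul_mem_mul (Ideal.mem_map_of_mem _ hi) (hKmem m hmK)
        have h4 : JC * JC = ⊥ := by rw [← pow_two]; exact hJC2
        rw [h1, h2]
        exact Ideal.mem_bot.mp (h4 ▸ h3)
      · intro a b ha hb
        rw [map_add, ha, hb, add_zero]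
    exact hgen x hx2
  -- the ring T
  set Q0 : Ideal P := K ^ 2 ⊔ JP with hQ0def
  set T := P ⧸ Q0 with hTdef
  set mkT : P →ₐ[S] T := Ideal.Quotient.mkₐ S Q0 with hmkTdef
  set Kt : Ideal T := K.map (Ideal.Quotient.mk Q0) with hKtdef
  have hKt2 : Kt ^ 2 = ⊥ := by
    rw [hKtdef, ← Ideal.map_pow, eq_bot_iff, Ideal.map_le_iff_le_comap]
    intro x hx
    show Ideal.Quotient.mk Q0 x ∈ (⊥ : Ideal T)
    rw [Ideal.mem_bot, Ideal.Quotient.eq_zero_iff_mem]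
    exact Ideal.mem_sup_left hx
  letI algSbarT : Algebra (S ⧸ JS) T :=
    (Ideal.Quotient.lift JS ((Ideal.Quotient.mk Q0).comp (algebraMap S P))
      (fun s hs => by
        show Ideal.Quotient.mk Q0 (algebraMap S P s) = 0
        rw [Ideal.Quotient.eq_zero_iff_mem]
        refine Ideal.mem_sup_right ?_
        have h5 : algebraMap S P s ∈ JS.map (algebraMap S P) := Ideal.mem_map_of_mem _ hs
        rwa [hJS, map_map_algebraMap I, ← hJPdef] at h5)).toAlgebra
  have halgT : ∀ s : S, algebraMap (S ⧸ JS) T (Ideal.Quotient.mk JS s)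
      = Ideal.Quotient.mk Q0 (algebraMap S P s) := fun _ => rfl
  set ε₀ : P →ₐ[S] (T ⧸ Kt) := (Ideal.Quotient.mkₐ S Kt).comp mkT with hε₀def
  have hε₀K : ∀ k, π k = 0 → ε₀ k = 0 := by
    intro k hk
    show Ideal.Quotient.mk Kt (Ideal.Quotient.mk Q0 k) = 0
    rw [Ideal.Quotient.eq_zero_iff_mem]
    exact Ideal.mem_map_of_mem _ (RingHom.mem_ker.mpr hk)
  set u : B →ₐ[S] (T ⧸ Kt) := descendAux (C := T ⧸ Kt) π hπs ε₀ hε₀K with hudef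
  have hu0 := descendAux_apply (C := T ⧸ Kt) π hπs ε₀ hε₀K
  have hu : ∀ x : P, u (π x) = ε₀ x := hu0
  have hmapJP : JP.map (π : P →+* B) = JB := by
    rw [hJPdef, Ideal.map_map, hJB]
    congr 1
    ext r
    show π (algebraMap R P r) = algebraMap R B r
    rw [IsScalarTower.algebraMap_apply R S P, AlgHom.commutes,
      ← IsScalarTower.algebraMap_apply]
  have huJB : ∀ b ∈ JB, u b = 0 := by
    intro b hb
    rw [← hmapJP] at hb
    obtain ⟨y, hyJP, rfl⟩ := Ideal.mem_map_iff_of_surjective _ hπs |>.mp hb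
    rw [hu]
    show Ideal.Quotient.mk Kt (Ideal.Quotient.mk Q0 y) = 0
    have h6 : Ideal.Quotient.mk Q0 y = 0 :=
      Ideal.Quotient.eq_zero_iff_mem.mpr (Ideal.mem_sup_right hyJP)
    rw [h6, map_zero]
  set τ : (B ⧸ JB) →ₐ[S ⧸ JS] (T ⧸ Kt) :=
    { toRingHom := Ideal.Quotient.lift JB u.toRingHom huJB
      commutes' := by
        intro c
        obtain ⟨s, rfl⟩ := Ideal.Quotient.mk_surjective c
        show Ideal.Quotient.lift JB u.toRingHom huJB
          (algebraMap (S ⧸ JS) (B ⧸ JB) (Ideal.Quotient.mk JS s)) = _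
        rw [hbar, Ideal.Quotient.lift_mk]
        show u (algebraMap S B s) = _
        rw [AlgHom.commutes]
        rfl } with hτdef
  have hτmk : ∀ b : B, τ (Ideal.Quotient.mk JB b) = u b := by
    intro b
    show Ideal.Quotient.lift JB u.toRingHom huJB (Ideal.Quotient.mk JB b) = u b
    rw [Ideal.Quotient.lift_mk]
    rfl
  have hKtnil : IsNilpotent Kt := ⟨2, hKt2⟩
  set σ : (B ⧸ JB) →ₐ[S ⧸ JS] T := Algebra.FormallySmooth.lift Kt hKtnil τ with hσdef
  have hσ : ∀ x, Ideal.Quotient.mk Kt (σ x) = τ x :=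
    fun x => Algebra.FormallySmooth.mk_lift Kt hKtnil τ x
  -- the difference
  set dval : P → T := fun x => mkT x - σ (Ideal.Quotient.mk JB (π x)) with hdvaldef
  have hdvalKt : ∀ x, dval x ∈ Kt := by
    intro x
    have h1 : Ideal.Quotient.mk Kt (dval x) = 0 := by
      show Ideal.Quotient.mk Kt (mkT x - σ (Ideal.Quotient.mk JB (π x))) = 0
      rw [map_sub, hσ, hτmk, hu]
      show Ideal.Quotient.mk Kt (mkT x) - ε₀ x = 0
      rw [sub_eq_zero]
      rfl
    rwa [Ideal.Quotient.eq_zero_iff_mem] at h1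
  -- the map Θ
  letI algPC : Algebra P C := p.toRingHom.toAlgebra
  set lam : K →ₗ[P] T := (Algebra.linearMap P T).comp (Submodule.subtype K) with hlamdef
  set dl : K →ₗ[P] C := (Algebra.linearMap P C).comp (Submodule.subtype K) with hdldef
  have hlam : ∀ k : K, lam k = Ideal.Quotient.mk Q0 (k : P) := fun _ => rfl
  have hdl : ∀ k : K, dl k = p (k : P) := fun _ => rfl
  have hker_le : LinearMap.ker lam ≤ LinearMap.ker dl := by
    rintro ⟨k, hk⟩ hmem
    have h1 : Ideal.Quotient.mk Q0 k = 0 := hmem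
    have h2 : k ∈ Q0 := by rwa [Ideal.Quotient.eq_zero_iff_mem] at h1
    rw [hQ0def] at h2
    obtain ⟨a, ha, b, hb, hab⟩ := Submodule.mem_sup.mp h2
    have haK : a ∈ K := (Ideal.pow_le_self two_ne_zero) ha
    have hpa : p a = 0 := by
      have h3 : p a ∈ (K.map (p : P →+* C)) ^ 2 := by
        rw [← Ideal.map_pow]
        exact Ideal.mem_map_of_mem _ ha
      have h4 : (K.map (p : P →+* C)) ^ 2 ≤ JC ^ 2 := by
        rw [pow_two, pow_two]
        refine Ideal.mul_mono ?_ ?_ <;>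
        · rw [Ideal.map_le_iff_le_comap]
          intro z hz
          exact hKmem z hz
      rw [hJC2] at h4
      exact Ideal.mem_bot.mp (h4 h3)
    have hbK : b ∈ K := by
      have : b = k - a := by rw [← hab]; ring
      rw [this]
      exact Submodule.sub_mem K hk haK
    have hpb : p b = 0 := hflatkey b hbK hb
    show dl ⟨k, hk⟩ = 0
    rw [hdl]
    show p k = 0
    rw [← hab, map_add, hpa, hpb, add_zero]
  set eqr := lam.quotKerEquivRange with heqrdef
  set Θ : ↥(LinearMap.range lam) →ₗ[P] C :=
    (Submodule.liftQ (LinearMap.ker lam) dl hker_le).comp eqr.symm.toLinearMap with hΘdef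
  have hΘ : ∀ (k : P) (hk : k ∈ K) (hmem : Ideal.Quotient.mk Q0 k ∈ LinearMap.range lam),
      Θ ⟨Ideal.Quotient.mk Q0 k, hmem⟩ = p k := by
    intro k hk hmem
    have h1 : (⟨Ideal.Quotient.mk Q0 k, hmem⟩ : ↥(LinearMap.range lam))
        = eqr (Submodule.Quotient.mk ⟨k, hk⟩) := by
      apply Subtype.ext
      rw [heqrdef, LinearMap.quotKerEquivRange_apply_mk]
      rfl
    show (Submodule.liftQ (LinearMap.ker lam) dl hker_le)
      (eqr.symm.toLinearMap ⟨Ideal.Quotient.mk Q0 k, hmem⟩) = p k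
    rw [h1]
    show (Submodule.liftQ (LinearMap.ker lam) dl hker_le)
      (eqr.symm (eqr (Submodule.Quotient.mk ⟨k, hk⟩))) = p k
    rw [LinearEquiv.symm_apply_apply, Submodule.liftQ_apply]
    exact hdl ⟨k, hk⟩
  have hrange : ∀ y ∈ Kt, y ∈ LinearMap.range lam := by
    intro y hy
    rw [hKtdef] at hy
    obtain ⟨k, hkK, rfl⟩ :=
      Ideal.mem_map_iff_of_surjective _ Ideal.Quotient.mk_surjective |>.mp hy
    exact ⟨⟨k, hkK⟩, rfl⟩
  set d : P → C := fun x => Θ ⟨dval x, hrange _ (hdvalKt x)⟩ with hddef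
  have hdJC : ∀ x, d x ∈ JC := by
    intro x
    obtain ⟨⟨k, hkK⟩, hk2⟩ := hrange _ (hdvalKt x)
    have h1 : (⟨dval x, hrange _ (hdvalKt x)⟩ : ↥(LinearMap.range lam))
        = ⟨Ideal.Quotient.mk Q0 k, LinearMap.mem_range.mpr ⟨⟨k, hkK⟩, rfl⟩⟩ := by
      apply Subtype.ext
      show dval x = Ideal.Quotient.mk Q0 k
      rw [← hk2]
      rfl
    show Θ ⟨dval x, hrange _ (hdvalKt x)⟩ ∈ JC
    rw [h1, hΘ k hkK]
    exact hKmem k hkK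
  have hdK : ∀ k ∈ K, d k = p k := by
    intro k hk
    have hπk : π k = 0 := RingHom.mem_ker.mp hk
    have hdv : dval k = Ideal.Quotient.mk Q0 k := by
      show mkT k - σ (Ideal.Quotient.mk JB (π k)) = Ideal.Quotient.mk Q0 k
      rw [hπk, map_zero, map_zero, sub_zero]
      rfl
    show Θ ⟨dval k, hrange _ (hdvalKt k)⟩ = p k
    have h1 : (⟨dval k, hrange _ (hdvalKt k)⟩ : ↥(LinearMap.range lam))
        = ⟨Ideal.Quotient.mk Q0 k, by rw [← hdv]; exact hrange _ (hdvalKt k)⟩ :=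
      Subtype.ext hdv
    rw [h1, hΘ k hk]
  have hd0 : d 0 = 0 := by
    have hdv : dval 0 = 0 := by
      show mkT 0 - σ (Ideal.Quotient.mk JB (π 0)) = 0
      rw [map_zero, map_zero, map_zero, map_zero, sub_zero]
    show Θ ⟨dval 0, hrange _ (hdvalKt 0)⟩ = 0
    have h1 : (⟨dval 0, hrange _ (hdvalKt 0)⟩ : ↥(LinearMap.range lam)) = 0 :=
      Subtype.ext hdv
    rw [h1, map_zero]
  have hd_add : ∀ x y : P, d (x + y) = d x + d y := by
    intro x y
    show Θ ⟨dval (x+y), _⟩ = Θ ⟨dval x, _⟩ + Θ ⟨dval y, _⟩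
    rw [← map_add]
    congr 1
    apply Subtype.ext
    show dval (x + y) = dval x + dval y
    show mkT (x+y) - σ (Ideal.Quotient.mk JB (π (x+y))) = _
    rw [map_add, map_add, map_add, map_add]
    ring
  have hd_alg : ∀ s : S, d (algebraMap S P s) = 0 := by
    intro s
    have hdv : dval (algebraMap S P s) = 0 := by
      show mkT (algebraMap S P s) - σ (Ideal.Quotient.mk JB (π (algebraMap S P s))) = 0
      rw [AlgHom.commutes π, ← hbar, AlgHom.commutes σ, halgT]
      show Ideal.Quotient.mk Q0 (algebraMap S P s) - Ideal.Quotient.mk Q0 (algebraMap S P s) = 0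
      rw [sub_self]
    show Θ ⟨dval (algebraMap S P s), _⟩ = 0
    have h1 : (⟨dval (algebraMap S P s), hrange _ (hdvalKt _)⟩ : ↥(LinearMap.range lam)) = 0 :=
      Subtype.ext hdv
    rw [h1, map_zero]
  have hsmulT : ∀ (x : P) (t : T), x • t = Ideal.Quotient.mk Q0 x * t := by
    intro x t
    obtain ⟨z, rfl⟩ := Ideal.Quotient.mk_surjective t
    rw [← map_mul]
    rfl
  have hsmulC : ∀ (x : P) (c : C), x • c = p x * c := by
    intro x c
    rw [Algebra.smul_def]
    rfl
  have hdval_mul : ∀ x y : P, dval (x * y)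
      = Ideal.Quotient.mk Q0 x * dval y + Ideal.Quotient.mk Q0 y * dval x := by
    intro x y
    have h0 : dval x * dval y = 0 := by
      have hm : dval x * dval y ∈ Kt * Kt := Ideal.mul_mem_mul (hdvalKt x) (hdvalKt y)
      rw [(pow_two Kt).symm, hKt2, Ideal.mem_bot] at hm
      exact hm
    have e2 : dval x = mkT x - σ (Ideal.Quotient.mk JB (π x)) := rfl
    have e3 : dval y = mkT y - σ (Ideal.Quotient.mk JB (π y)) := rfl
    show mkT (x * y) - σ (Ideal.Quotient.mk JB (π (x * y))) = _
    rw [map_mul, map_mul, map_mul, map_mul, e2, e3]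
    rw [e2, e3] at h0
    have hmkTx : (Ideal.Quotient.mk Q0 x : T) = mkT x := rfl
    have hmkTy : (Ideal.Quotient.mk Q0 y : T) = mkT y := rfl
    rw [hmkTx, hmkTy]
    linear_combination -h0
  have hd_mul : ∀ x y : P, d (x * y) = p x * d y + p y * d x := by
    intro x y
    show Θ ⟨dval (x*y), hrange _ (hdvalKt _)⟩ = p x * Θ ⟨dval y, hrange _ (hdvalKt y)⟩
      + p y * Θ ⟨dval x, hrange _ (hdvalKt x)⟩
    have hv : (⟨dval (x*y), hrange _ (hdvalKt _)⟩ : ↥(LinearMap.range lam))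
        = x • ⟨dval y, hrange _ (hdvalKt y)⟩ + y • ⟨dval x, hrange _ (hdvalKt x)⟩ := by
      apply Subtype.ext
      simp only [Submodule.coe_add, SetLike.val_smul]
      rw [hsmulT, hsmulT]
      exact hdval_mul x y
    rw [hv, map_add, map_smul, map_smul, hsmulC, hsmulC]
  set h' : P →ₐ[S] C :=
    { toFun := fun x => p x - d x
      map_one' := by
        show p 1 - d 1 = 1
        have h1 : d 1 = 0 := by
          have := hd_alg 1
          rwa [map_one] at this
        rw [map_one, h1, sub_zero]
      map_mul' := by
        intro x y
        show p (x * y) - d (x * y) = (p x - d x) * (p y - d y)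
        have h0 : d x * d y = 0 := by
          have hm : d x * d y ∈ JC * JC := Ideal.mul_mem_mul (hdJC x) (hdJC y)
          rw [← pow_two, hJC2, Ideal.mem_bot] at hm
          exact hm
        rw [map_mul, hd_mul]
        linear_combination -h0
      map_zero' := by
        show p 0 - d 0 = 0
        rw [map_zero, hd0, sub_zero]
      map_add' := by
        intro x y
        show p (x + y) - d (x + y) = (p x - d x) + (p y - d y)
        rw [map_add, hd_add]
        ring
      commutes' := by
        intro s
        show p (algebraMap S P s) - d (algebraMap S P s) = algebraMap S C s
        rw [hd_alg, AlgHom.commutes, sub_zero] } with hh'def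
  have hh'K : ∀ k, π k = 0 → h' k = 0 := by
    intro k hk
    show p k - d k = 0
    rw [hdK k (RingHom.mem_ker.mpr hk), sub_self]
  set h : B →ₐ[S] C := descendAux π hπs h' hh'K with hhdef
  have hhπ : ∀ x, h (π x) = h' x := descendAux_apply π hπs h' hh'K
  have hstep2 : ∀ b : B, Ideal.Quotient.mk JC (h b) = h₁ b := by
    intro b
    obtain ⟨x, rfl⟩ := hπs b
    rw [hhπ]
    show Ideal.Quotient.mk JC (p x - d x) = h₁ (π x)
    rw [map_sub, hp, Ideal.Quotient.eq_zero_iff_mem.mpr (hdJC x), sub_zero]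
  -- ===================== CONCLUSION =====================
  set L : Ideal (C ⧸ J) := JC.map (Ideal.Quotient.mk J) with hLdef
  have hL2 : L ^ 2 = ⊥ := by rw [hLdef, ← Ideal.map_pow, hJC2, Ideal.map_bot]
  have hkerθ : ∀ z : C ⧸ J, θ z = 0 → z ∈ L := by
    intro z hz
    obtain ⟨c, rfl⟩ := Ideal.Quotient.mk_surjective z
    rw [hθ, Ideal.Quotient.eq_zero_iff_mem] at hz
    obtain ⟨j, hjJ, hjc⟩ :=
      Ideal.mem_map_iff_of_surjective _ Ideal.Quotient.mk_surjective |>.mp hz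
    have hcj : c - j ∈ JC := by
      rw [← Ideal.Quotient.mk_eq_mk_iff_sub_mem, hjc]
    have h7 : Ideal.Quotient.mk J c = Ideal.Quotient.mk J (c - j) := by
      rw [map_sub, Ideal.Quotient.eq_zero_iff_mem.mpr hjJ, sub_zero]
    rw [h7]
    exact Ideal.mem_map_of_mem _ hcj
  refine ⟨h, ?_⟩
  apply Algebra.FormallyUnramified.comp_injective (A := B) (R := S) L hL2
  apply AlgHom.ext
  intro b
  show Ideal.Quotient.mk L (Ideal.Quotient.mk J (h b)) = Ideal.Quotient.mk L (g b)
  rw [Ideal.Quotient.mk_eq_mk_iff_sub_mem]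
  apply hkerθ
  rw [map_sub, hθ, hstep2, hstep1, sub_self]

set_option maxHeartbeats 1000000 in
set_option synthInstance.maxHeartbeats 200000 in
theorem fp_aux
    (R : Type u) [CommRing R] (I : Ideal R) (hI : I ^ 2 = ⊥)
    (S : Type u) [CommRing S] [Algebra R S]
    (B : Type u) [CommRing B] [Algebra R B] [Algebra S B] [IsScalarTower R S B]
    [Module.Flat R B]
    (JS : Ideal S) (JB : Ideal B)
    (hJS : JS = I.map (algebraMap R S)) (hJB : JB = I.map (algebraMap R B))
    [Algebra (S ⧸ JS) (B ⧸ JB)]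
    (hbar : ∀ s : S, algebraMap (S ⧸ JS) (B ⧸ JB) (Ideal.Quotient.mk JS s)
        = Ideal.Quotient.mk JB (algebraMap S B s))
    (hfp : Algebra.FinitePresentation (S ⧸ JS) (B ⧸ JB)) :
    Algebra.FinitePresentation S B := by
  classical
  obtain ⟨n, fbar, hfs, hfk⟩ := hfp.out
  set Pn := MvPolynomial (Fin n) S with hPndef
  set ρn : Pn →+* MvPolynomial (Fin n) (S ⧸ JS) :=
    MvPolynomial.map (Ideal.Quotient.mk JS) with hρdef
  have hρs : Function.Surjective ρn :=
    MvPolynomial.map_surjective _ Ideal.Quotient.mk_surjective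
  choose b hb using fun i : Fin n => Ideal.Quotient.mk_surjective (fbar (MvPolynomial.X i))
  set q : Pn →ₐ[S] B := MvPolynomial.aeval b with hqdef
  have hsq : ∀ x : Pn, Ideal.Quotient.mk JB (q x) = fbar (ρn x) := by
    have : (Ideal.Quotient.mk JB).comp (q : Pn →+* B)
        = (fbar : MvPolynomial (Fin n) (S ⧸ JS) →+* (B ⧸ JB)).comp ρn := by
      apply MvPolynomial.ringHom_ext
      · intro s
        show Ideal.Quotient.mk JB (q (MvPolynomial.C s)) = fbar (ρn (MvPolynomial.C s))
        rw [hqdef, hρdef]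
        show Ideal.Quotient.mk JB ((MvPolynomial.aeval b) (MvPolynomial.C s))
          = fbar (MvPolynomial.map (Ideal.Quotient.mk JS) (MvPolynomial.C s))
        rw [MvPolynomial.aeval_C, MvPolynomial.map_C, ← hbar]
        show algebraMap (S ⧸ JS) (B ⧸ JB) (Ideal.Quotient.mk JS s)
          = fbar (MvPolynomial.C (Ideal.Quotient.mk JS s))
        have h2 : (MvPolynomial.C (Ideal.Quotient.mk JS s) :
            MvPolynomial (Fin n) (S ⧸ JS))
            = algebraMap (S ⧸ JS) (MvPolynomial (Fin n) (S ⧸ JS)) (Ideal.Quotient.mk JS s) :=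
          rfl
        rw [h2, AlgHom.commutes]
      · intro i
        show Ideal.Quotient.mk JB (q (MvPolynomial.X i)) = fbar (ρn (MvPolynomial.X i))
        rw [hqdef, hρdef]
        show Ideal.Quotient.mk JB ((MvPolynomial.aeval b) (MvPolynomial.X i))
          = fbar (MvPolynomial.map (Ideal.Quotient.mk JS) (MvPolynomial.X i))
        rw [MvPolynomial.aeval_X, MvPolynomial.map_X, hb]
    intro x
    exact congrFun (congrArg (fun f => f.toFun) this) x
  -- surjectivity of q
  have hITop : (I • (⊤ : Submodule R B) : Submodule R B) = JB.restrictScalars R := by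
    rw [hJB]; exact Ideal.smul_top_eq_map I
  have hqs : Function.Surjective q := by
    have hle : (⊤ : Submodule R B) ≤
        (Subalgebra.toSubmodule q.range).restrictScalars R ⊔ I • (⊤ : Submodule R B) := by
      intro b0 _
      obtain ⟨y, hy⟩ := hfs (Ideal.Quotient.mk JB b0)
      obtain ⟨x, rfl⟩ := hρs y
      have hdiff : b0 - q x ∈ JB := by
        have h4 : Ideal.Quotient.mk JB (q x) = Ideal.Quotient.mk JB b0 := by
          rw [hsq x, hy]
        rw [← Ideal.Quotient.mk_eq_mk_iff_sub_mem]
        exact h4.symm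
      refine Submodule.mem_sup.mpr ⟨q x, ?_, b0 - q x, ?_, by ring⟩
      · exact ⟨x, rfl⟩
      · rw [hITop]; exact hdiff
    have := sqZero_le_of_le_sup_smul hI hle
    intro b0
    have hm := this (Submodule.mem_top : b0 ∈ ⊤)
    exact hm
  -- the kernels
  set Kq : Ideal Pn := RingHom.ker q with hKqdef
  set Kbar : Ideal (MvPolynomial (Fin n) (S ⧸ JS)) := RingHom.ker fbar with hKbardef
  set JPn : Ideal Pn := I.map (algebraMap R Pn) with hJPndef
  have hkerρ : RingHom.ker ρn = JPn := by
    rw [hρdef, MvPolynomial.ker_map]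
    have h1 : RingHom.ker (Ideal.Quotient.mk JS) = JS := Ideal.mk_ker
    rw [h1, hJPndef, hJS]
    have h2 : (MvPolynomial.C : S →+* Pn) = algebraMap S Pn := rfl
    rw [h2, map_map_algebraMap I]
  have hmapJPn : JPn.map (q : Pn →+* B) = JB := by
    rw [hJPndef, Ideal.map_map, hJB]
    congr 1
    ext r
    show q (algebraMap R Pn r) = algebraMap R B r
    rw [IsScalarTower.algebraMap_apply R S Pn, AlgHom.commutes,
      ← IsScalarTower.algebraMap_apply]
  have hmapK : Kq.map ρn = Kbar := by
    apply le_antisymm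
    · rw [Ideal.map_le_iff_le_comap]
      intro x hx
      show ρn x ∈ Kbar
      rw [hKbardef, RingHom.mem_ker, ← hsq x, RingHom.mem_ker.mp hx, map_zero]
    · intro y hy
      obtain ⟨x, rfl⟩ := hρs y
      have h1 : Ideal.Quotient.mk JB (q x) = 0 := by
        rw [hsq x]; exact RingHom.mem_ker.mp hy
      have h2 : q x ∈ JB := by rwa [Ideal.Quotient.eq_zero_iff_mem] at h1
      rw [← hmapJPn] at h2
      obtain ⟨z, hzJPn, hzq⟩ := Ideal.mem_map_iff_of_surjective _ hqs |>.mp h2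
      have hxz : x - z ∈ Kq := by
        rw [hKqdef, RingHom.mem_ker, map_sub, hzq, sub_self]
      have hz0 : ρn z = 0 := by
        have : z ∈ RingHom.ker ρn := by rw [hkerρ]; exact hzJPn
        exact RingHom.mem_ker.mp this
      have : ρn x = ρn (x - z) := by rw [map_sub, hz0, sub_zero]
      rw [this]
      exact Ideal.mem_map_of_mem _ hxz
  -- lift the generators
  obtain ⟨tbar, htbar0⟩ := hfk
  have htbar : Ideal.span (tbar : Set (MvPolynomial (Fin n) (S ⧸ JS))) = Kbar := htbar0
  have hmemK : ∀ y ∈ tbar, (y : MvPolynomial (Fin n) (S ⧸ JS)) ∈ Kbar := by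
    intro y hy
    rw [← htbar]
    exact Ideal.subset_span hy
  have hchoice : ∀ y : MvPolynomial (Fin n) (S ⧸ JS), y ∈ Kbar → ∃ x, x ∈ Kq ∧ ρn x = y := by
    intro y hy
    rw [← hmapK] at hy
    obtain ⟨x, hx1, hx2⟩ := Ideal.mem_map_iff_of_surjective _ hρs |>.mp hy
    exact ⟨x, hx1, hx2⟩
  choose pre hpre1 hpre2 using hchoice
  set T0 : Finset Pn :=
    tbar.attach.image (fun y => pre y.1 (hmemK y.1 y.2)) with hT0def
  have hT0le : Ideal.span (T0 : Set Pn) ≤ Kq := by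
    rw [Ideal.span_le]
    intro x hx
    simp only [hT0def, Finset.coe_image, Set.mem_image, Finset.mem_coe, Finset.mem_attach,
      true_and] at hx
    obtain ⟨⟨y, hy⟩, -, rfl⟩ := hx
    exact hpre1 _ _
  have hKbar_le : Kbar ≤ (Ideal.span (T0 : Set Pn)).map ρn := by
    rw [← htbar, Ideal.span_le]
    intro y hy
    have h1 : y = ρn (pre y (hmemK y hy)) := (hpre2 _ _).symm
    rw [h1]
    apply Ideal.mem_map_of_mem
    apply Ideal.subset_span
    simp only [hT0def, Finset.coe_image, Set.mem_image, Finset.mem_coe, Finset.mem_attach,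
      true_and]
    exact ⟨⟨y, hy⟩, rfl⟩
  -- flatness step : Kq ≤ span T0
  set qR : Pn →ₗ[R] B := q.toLinearMap.restrictScalars R with hqRdef
  have hKq_le : (Kq.restrictScalars R : Submodule R Pn)
      ≤ (Ideal.span (T0 : Set Pn)).restrictScalars R
        ⊔ I • (Kq.restrictScalars R : Submodule R Pn) := by
    intro x hx
    have hxK : x ∈ Kq := hx
    have h1 : ρn x ∈ Kbar := by
      rw [hKbardef, RingHom.mem_ker, ← hsq x, RingHom.mem_ker.mp hxK, map_zero]
    obtain ⟨y, hy1, hy2⟩ :=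
      Ideal.mem_map_iff_of_surjective _ hρs |>.mp (hKbar_le h1)
    have hyK : y ∈ Kq := hT0le hy1
    have hxy : x - y ∈ JPn := by
      have : x - y ∈ RingHom.ker ρn := by
        rw [RingHom.mem_ker, map_sub, hy2, sub_self]
      rwa [hkerρ] at this
    have hxyK : qR (x - y) = 0 := by
      show q (x - y) = 0
      rw [map_sub, RingHom.mem_ker.mp hxK, RingHom.mem_ker.mp hyK, sub_self]
    have hxyI : x - y ∈ I • (⊤ : Submodule R Pn) := by
      rw [Ideal.smul_top_eq_map]
      rw [hJPndef] at hxy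
      exact hxy
    have h2 := mem_smul_ker_of_flat I qR (fun b0 => hqs b0) hxyI hxyK
    have h3 : LinearMap.ker qR = Kq.restrictScalars R := by
      ext w
      show q w = 0 ↔ w ∈ Kq
      rw [hKqdef]
      exact (RingHom.mem_ker (f := (q : Pn →+* B))).symm
    rw [h3] at h2
    refine Submodule.mem_sup.mpr ⟨y, hy1, x - y, h2, by ring⟩
  have hfin := sqZero_le_of_le_sup_smul hI hKq_le
  have hKqspan : Kq = Ideal.span (T0 : Set Pn) := by
    apply le_antisymm
    · intro x hx
      exact hfin hx
    · exact hT0le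
  exact ⟨⟨n, q, hqs, ⟨T0, hKqspan.symm⟩⟩⟩


/-- Let `R` be a commutative ring and `I` an ideal with `I² = 0`. Let `S` and
`B` be `R`-algebras, both flat as `R`-modules, and `f : S → B` an `R`-algebra homomorphism such
that the induced ring homomorphism `S/IS → B/IB` is étale. Then `f` is étale, i.e. `B` is an
étale `S`-algebra via `f`. -/
theorem etale_of_flat_of_etale_mod_squareZero_ideal
    (R : Type u) [CommRing R] (I : Ideal R) (hI : I ^ 2 = ⊥)
    (S : Type u) [CommRing S] [Algebra R S] [Module.Flat R S]
    (B : Type u) [CommRing B] [Algebra R B] [Module.Flat R B]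
    (f : S →ₐ[R] B)
    (het :
      letI : Algebra (S ⧸ I.map (algebraMap R S)) (B ⧸ I.map (algebraMap R B)) :=
        (Ideal.quotientMap (I.map (algebraMap R B)) f.toRingHom
          (by
            rw [Ideal.map_le_iff_le_comap, Ideal.comap_comap]
            intro a ha
            rw [Ideal.mem_comap, RingHom.comp_apply]
            show f (algebraMap R S a) ∈ _
            rw [f.commutes]
            exact Ideal.mem_map_of_mem _ ha)).toAlgebra
      Algebra.Etale (S ⧸ I.map (algebraMap R S)) (B ⧸ I.map (algebraMap R B))) :
    letI : Algebra S B := f.toRingHom.toAlgebra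
    Algebra.Etale S B := by
  letI : Algebra S B := f.toRingHom.toAlgebra
  letI : IsScalarTower R S B := IsScalarTower.of_algebraMap_eq' f.comp_algebraMap.symm
  letI instBar : Algebra (S ⧸ I.map (algebraMap R S)) (B ⧸ I.map (algebraMap R B)) :=
    (Ideal.quotientMap (I.map (algebraMap R B)) f.toRingHom
      (by
        rw [Ideal.map_le_iff_le_comap, Ideal.comap_comap]
        intro a ha
        rw [Ideal.mem_comap, RingHom.comp_apply]
        show f (algebraMap R S a) ∈ _
        rw [f.commutes]
        exact Ideal.mem_map_of_mem _ ha)).toAlgebra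
  haveI hetale : Algebra.Etale (S ⧸ I.map (algebraMap R S)) (B ⧸ I.map (algebraMap R B)) := het
  have hbar : ∀ s : S,
      algebraMap (S ⧸ I.map (algebraMap R S)) (B ⧸ I.map (algebraMap R B))
        (Ideal.Quotient.mk (I.map (algebraMap R S)) s)
        = Ideal.Quotient.mk (I.map (algebraMap R B)) (algebraMap S B s) := by
    intro s
    exact Ideal.quotientMap_mk (H := by
      rw [Ideal.map_le_iff_le_comap, Ideal.comap_comap]
      intro a ha
      rw [Ideal.mem_comap, RingHom.comp_apply]
      show f (algebraMap R S a) ∈ _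
      rw [f.commutes]
      exact Ideal.mem_map_of_mem _ ha)
  have hJB2 : (I.map (algebraMap R B)) ^ 2 = ⊥ := by
    rw [← Ideal.map_pow, hI, Ideal.map_bot]
  have hJBeq : I.map (algebraMap R B) = (I.map (algebraMap R S)).map (algebraMap S B) :=
    (map_map_algebraMap I).symm
  haveI hunr : Algebra.FormallyUnramified S B :=
    unramified_aux (I.map (algebraMap R S)) (I.map (algebraMap R B)) hJB2 hJBeq hbar
  haveI hsm : Algebra.FormallySmooth S B :=
    smooth_aux R I hI S B (I.map (algebraMap R S)) (I.map (algebraMap R B)) rfl rfl hbar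
  have hfp : Algebra.FinitePresentation S B :=
    fp_aux R I hI S B (I.map (algebraMap R S)) (I.map (algebraMap R B)) rfl rfl hbar
      hetale.finitePresentation
  exact { formallyEtale := Algebra.FormallyEtale.of_formallyUnramified_and_formallySmooth
          finitePresentation := hfp }
end

section
/- Let p be a prime and let A be a commutative ring which is flat as a ℤ/p²ℤ-module. Let J be an ideal of A such that the quotient ring A/J is also flat as a ℤ/p²ℤ-module. Let x ∈ J be an element whose image in A/pA generates the image of J in A/pA (i.e., the ideal (J + pA)/pA is generated by the class of x). Then J is generated by x as an ideal of A, i.e., J = xA. -/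
open TensorProduct

lemma zmod_ann_p (p : ℕ) (hp : p.Prime) (r : ZMod (p ^ 2))
    (h : r * (p : ZMod (p ^ 2)) = 0) : (p : ZMod (p ^ 2)) ∣ r := by
  haveI : NeZero (p ^ 2) := ⟨pow_ne_zero 2 hp.ne_zero⟩
  have hr : ((r.val : ℕ) : ZMod (p ^ 2)) = r := ZMod.natCast_rightInverse r
  have h2 : ((r.val * p : ℕ) : ZMod (p ^ 2)) = 0 := by push_cast; rw [hr]; exact h
  rw [ZMod.natCast_eq_zero_iff] at h2
  have hdvd : p ∣ r.val := by
    have h3 : p * p ∣ r.val * p := by rwa [← pow_two]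
    exact (mul_dvd_mul_iff_right hp.ne_zero).mp (by rwa [mul_comm p p] at h3)
  obtain ⟨k, hk⟩ := hdvd
  exact ⟨(k : ZMod (p ^ 2)), by rw [← hr, hk]; push_cast; ring⟩

lemma flat_ker_smul_p (p : ℕ) (hp : p.Prime) (M : Type*) [AddCommGroup M]
    [Module (ZMod (p ^ 2)) M] [Module.Flat (ZMod (p ^ 2)) M]
    (m : M) (hm : (p : ZMod (p ^ 2)) • m = 0) :
    ∃ m' : M, m = (p : ZMod (p ^ 2)) • m' := by
  have hp2 : (p : ZMod (p ^ 2)) * (p : ZMod (p ^ 2)) = 0 := by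
    have h0 : ((p ^ 2 : ℕ) : ZMod (p ^ 2)) = 0 := ZMod.natCast_self _
    push_cast at h0
    rw [← h0]; ring
  set I : Ideal (ZMod (p ^ 2)) := Ideal.span {(p : ZMod (p ^ 2))} with hI
  have hle : I ≤ LinearMap.ker (LinearMap.toSpanSingleton (ZMod (p ^ 2)) (ZMod (p ^ 2)) (p : ZMod (p ^ 2))) := by
    rw [hI, Ideal.span_le]
    rintro r hr
    simp only [Set.mem_singleton_iff] at hr
    subst hr
    simp [LinearMap.mem_ker, LinearMap.toSpanSingleton_apply, smul_eq_mul, hp2]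
  set ψ : (ZMod (p ^ 2) ⧸ I) →ₗ[ZMod (p ^ 2)] ZMod (p ^ 2) := Submodule.liftQ I (LinearMap.toSpanSingleton (ZMod (p ^ 2)) (ZMod (p ^ 2)) (p : ZMod (p ^ 2))) hle
    with hψ
  have hψ1 : ψ (Submodule.Quotient.mk (1 : ZMod (p ^ 2))) = (p : ZMod (p ^ 2)) := by
    rw [hψ, Submodule.liftQ_apply, LinearMap.toSpanSingleton_apply, one_smul]
  have hψinj : Function.Injective ψ := by
    rw [← LinearMap.ker_eq_bot, Submodule.eq_bot_iff]
    intro q hq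
    obtain ⟨r, rfl⟩ := Submodule.Quotient.mk_surjective I q
    have h1 : r • (p : ZMod (p ^ 2)) = 0 := hq
    rw [smul_eq_mul] at h1
    rw [Submodule.Quotient.mk_eq_zero]
    exact Ideal.mem_span_singleton.mpr (zmod_ann_p p hp r h1)
  have hinj : Function.Injective (LinearMap.rTensor M ψ) :=
    Module.Flat.rTensor_preserves_injective_linearMap ψ hψinj
  have hzero : (Submodule.Quotient.mk (1 : ZMod (p ^ 2)) : ZMod (p ^ 2) ⧸ I) ⊗ₜ[ZMod (p ^ 2)] m = (0 : (ZMod (p ^ 2) ⧸ I) ⊗[ZMod (p ^ 2)] M) := by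
    apply hinj
    rw [map_zero, LinearMap.rTensor_tmul, hψ1]
    have h5 : (p : ZMod (p ^ 2)) ⊗ₜ[ZMod (p ^ 2)] m
        = (1 : ZMod (p ^ 2)) ⊗ₜ[ZMod (p ^ 2)] ((p : ZMod (p ^ 2)) • m) := by
      rw [← TensorProduct.smul_tmul, smul_eq_mul, mul_one]
    rw [h5, hm, TensorProduct.tmul_zero]
  have h4 := congrArg (TensorProduct.quotTensorEquivQuotSMul M I) hzero
  rw [show (Submodule.Quotient.mk (1 : ZMod (p ^ 2)) : ZMod (p ^ 2) ⧸ I) = Ideal.Quotient.mk I 1 from rfl,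
    TensorProduct.quotTensorEquivQuotSMul_mk_tmul, one_smul,
    (TensorProduct.quotTensorEquivQuotSMul M I).map_zero] at h4
  have hmem : m ∈ I • (⊤ : Submodule (ZMod (p ^ 2)) M) := (Submodule.Quotient.mk_eq_zero _).mp h4
  refine Submodule.smul_induction_on hmem ?_ ?_
  · intro r hr n _
    obtain ⟨c, rfl⟩ := Ideal.mem_span_singleton.mp hr
    exact ⟨c • n, by rw [mul_comm, mul_smul, smul_smul, smul_smul, mul_comm]⟩
  · rintro n₁ n₂ ⟨a, rfl⟩ ⟨b, rfl⟩
    exact ⟨a + b, (smul_add _ _ _).symm⟩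

/-- Let `p` be a prime and `A` a commutative ring flat as a `ℤ/p²ℤ`-module.
Let `J` be an ideal of `A` such that `A/J` is also flat over `ℤ/p²ℤ`. If `x ∈ J` is an element
whose image in `A/pA` generates the image of `J` in `A/pA`, then `J = xA`. -/
theorem ideal_principal_of_flat_quotient_of_principal_mod_p
    (p : ℕ) (hp : p.Prime) (A : Type*) [CommRing A]
    [Algebra (ZMod (p ^ 2)) A] [Module.Flat (ZMod (p ^ 2)) A]
    (J : Ideal A) [Module.Flat (ZMod (p ^ 2)) (A ⧸ J)]
    (x : A) (hx : x ∈ J)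
    (hgen : J.map (Ideal.Quotient.mk (Ideal.span {(p : A)})) =
      Ideal.span {Ideal.Quotient.mk (Ideal.span {(p : A)}) x}) :
    J = Ideal.span {x} := by
  have hpA2 : (p : A) * (p : A) = 0 := by
    have h0 : (((p : ℕ) ^ 2 : ℕ) : A) = 0 := by
      rw [← map_natCast (algebraMap (ZMod (p ^ 2)) A), ZMod.natCast_self, map_zero]
    push_cast at h0
    rw [← h0]; ring
  -- any element of J is a*x + p*b
  have step : ∀ y ∈ J, ∃ a b : A, y = a * x + (p : A) * b := by
    intro y hy
    have h1 : Ideal.Quotient.mk (Ideal.span {(p : A)}) y ∈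
        Ideal.span {Ideal.Quotient.mk (Ideal.span {(p : A)}) x} := by
      rw [← hgen]; exact Ideal.mem_map_of_mem _ hy
    obtain ⟨c, hc⟩ := Ideal.mem_span_singleton.mp h1
    obtain ⟨a, rfl⟩ := Ideal.Quotient.mk_surjective c
    rw [← map_mul, Ideal.Quotient.eq] at hc
    obtain ⟨b, hb⟩ := Ideal.mem_span_singleton.mp hc
    exact ⟨a, b, by rw [mul_comm x a] at hb; linear_combination hb⟩
  apply le_antisymm
  · intro y hy
    obtain ⟨a, b, hab⟩ := step y hy
    -- p*b ∈ J
    have hpb : (p : A) * b ∈ J := by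
      have : (p : A) * b = y - a * x := by linear_combination -hab
      rw [this]
      exact J.sub_mem hy (J.mul_mem_left a hx)
    -- in A/J : p • mk b = 0
    have hsm : (p : ZMod (p ^ 2)) • (Ideal.Quotient.mk J b) = 0 := by
      rw [Algebra.smul_def, map_natCast (algebraMap (ZMod (p ^ 2)) (A ⧸ J)),
        show ((p : ℕ) : A ⧸ J) = Ideal.Quotient.mk J (p : A) by rfl,
        ← map_mul, Ideal.Quotient.eq_zero_iff_mem]
      exact hpb
    obtain ⟨m', hm'⟩ := flat_ker_smul_p p hp (A ⧸ J) _ hsm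
    obtain ⟨c, rfl⟩ := Ideal.Quotient.mk_surjective m'
    have hbc : b - (p : A) * c ∈ J := by
      rw [← Ideal.Quotient.eq_zero_iff_mem, map_sub, map_mul, sub_eq_zero]
      rw [hm', Algebra.smul_def, map_natCast (algebraMap (ZMod (p ^ 2)) (A ⧸ J))]
      rfl
    set j := b - (p : A) * c with hj
    -- j ∈ J, so j = d*x + p*e, so p*j = p*d*x
    obtain ⟨d, e, hde⟩ := step j hbc
    -- y = a*x + p*b = a*x + p*(j + p*c) = a*x + p*j = a*x + p*d*x
    refine Ideal.mem_span_singleton.mpr ⟨a + (p : A) * d, ?_⟩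
    have : y = (a + (p : A) * d) * x := by
      have hb' : b = j + (p : A) * c := by rw [hj]; ring
      calc y = a * x + (p : A) * b := hab
        _ = a * x + (p : A) * j + ((p : A) * (p : A)) * c := by rw [hb']; ring
        _ = a * x + (p : A) * j := by rw [hpA2]; ring
        _ = a * x + (p : A) * (d * x) + ((p : A) * (p : A)) * e := by rw [hde]; ring
        _ = (a + (p : A) * d) * x := by rw [hpA2]; ring
    rw [this, mul_comm]
  · rw [Ideal.span_le, Set.singleton_subset_iff]; exact hx
end
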